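/- Let k > 0, let X̂ be a p × n real matrix, and let A be a p × m real matrix whose columns are linearly independent (A has full column rank m). Then the Huber fitting objective F(S) = Σ_{i,j} H_k((X̂ − A·S)_{i,j}) on m × n real matrices is coercive: F(S) → ∞ as the (Frobenius) norm of S tends to infinity; consequently a minimizer of F over the set of entrywise-nonnegative matrices S exists. -/

import Mathlib

noncomputable def huber (k x : ℝ) : ℝ :=
  if |x| ≤ k then x ^ 2 / 2 else k * |x| - k ^ 2 / 2

lemma huber_continuous (k : ℝ) : Continuous (huber k) := by
  unfold huber
  apply Continuous.if_le (by fun_prop) (by fun_prop) continuous_abs continuous_const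
  intro x hx
  rw [← sq_abs, hx]; ring

lemma huber_lower {k : ℝ} (x : ℝ) : k * |x| - k ^ 2 / 2 ≤ huber k x := by
  unfold huber
  split_ifs with h
  · nlinarith [sq_nonneg (|x| - k), sq_abs x]
  · exact le_refl _

lemma huber_nonneg {k : ℝ} (hk : 0 ≤ k) (x : ℝ) : 0 ≤ huber k x := by
  unfold huber
  split_ifs with h
  · positivity
  · push_neg at h; nlinarith [abs_nonneg x]

attribute [local instance] Matrix.normedAddCommGroup Matrix.normedSpace

set_option maxHeartbeats 1000000 in
/-- If the columns of `A` are linearly independent (full column rank), the Huber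
fitting objective `F(S) = Σᵢⱼ H_k((X̂ − A·S)ᵢⱼ)` is coercive (`F(S) → ∞` as the
Frobenius norm of `S` tends to infinity), and consequently a minimizer of `F` over
the entrywise-nonnegative matrices exists. -/
theorem huber_fitting_coercive_and_min_exists (k : ℝ) (hk : 0 < k) (p n m : ℕ)
    (X : Matrix (Fin p) (Fin n) ℝ) (A : Matrix (Fin p) (Fin m) ℝ)
    (hA : LinearIndependent ℝ (fun j : Fin m => fun i : Fin p => A i j)) :
    Filter.Tendsto
      (fun S : Matrix (Fin m) (Fin n) ℝ => ∑ i : Fin p, ∑ j : Fin n, huber k ((X - A * S) i j))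
      (Filter.comap
        (fun S : Matrix (Fin m) (Fin n) ℝ => Real.sqrt (∑ i : Fin m, ∑ j : Fin n, (S i j) ^ 2))
        Filter.atTop)
      Filter.atTop ∧
    ∃ S₀ : Matrix (Fin m) (Fin n) ℝ, (∀ i j, 0 ≤ S₀ i j) ∧
      ∀ S : Matrix (Fin m) (Fin n) ℝ, (∀ i j, 0 ≤ S i j) →
        ∑ i : Fin p, ∑ j : Fin n, huber k ((X - A * S₀) i j) ≤
          ∑ i : Fin p, ∑ j : Fin n, huber k ((X - A * S) i j) := by
  set F : Matrix (Fin m) (Fin n) ℝ → ℝ :=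
    fun S => ∑ i : Fin p, ∑ j : Fin n, huber k ((X - A * S) i j) with hF
  set g : Matrix (Fin m) (Fin n) ℝ → ℝ :=
    fun S => Real.sqrt (∑ i : Fin m, ∑ j : Fin n, (S i j) ^ 2) with hg
  -- the linear map S ↦ A * S
  set L : Matrix (Fin m) (Fin n) ℝ →ₗ[ℝ] Matrix (Fin p) (Fin n) ℝ :=
    { toFun := fun S => A * S
      map_add' := fun S T => Matrix.mul_add A S T
      map_smul' := fun c S => Matrix.mul_smul A c S } with hL
  have hmv : Function.Injective A.mulVec := by
    rw [Matrix.mulVec_injective_iff]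
    exact hA
  have hker : LinearMap.ker L = ⊥ := by
    rw [LinearMap.ker_eq_bot']
    intro S hS
    ext l j
    have h1 : A.mulVec (fun l => S l j) = A.mulVec (fun l => (0 : Matrix (Fin m) (Fin n) ℝ) l j) := by
      ext i
      have := congrFun (congrFun hS i) j
      simpa [hL, Matrix.mulVec, dotProduct, Matrix.mul_apply] using this
    exact congrFun (hmv h1) l
  obtain ⟨K, hK0, hKanti⟩ := L.exists_antilipschitzWith hker
  set C : ℝ := (K : ℝ) with hC
  have hC0 : 0 ≤ C := K.coe_nonneg
  have hCS : ∀ S : Matrix (Fin m) (Fin n) ℝ, ‖S‖ ≤ C * ‖A * S‖ := by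
    intro S
    have := hKanti.le_mul_dist S 0
    rw [dist_zero_right, dist_eq_norm] at this
    simpa [hL] using this
  -- norm comparison: sup norm ≤ Frobenius-type quantity and back
  have habs_le_norm : ∀ (S : Matrix (Fin m) (Fin n) ℝ) (i : Fin m) (j : Fin n),
      |S i j| ≤ ‖S‖ := by
    intro S i j
    calc |S i j| = ‖S i j‖ := rfl
      _ ≤ ‖S i‖ := norm_le_pi_norm (S i) j
      _ ≤ ‖S‖ := norm_le_pi_norm S i
  have hg_le : ∀ S : Matrix (Fin m) (Fin n) ℝ, g S ≤ Real.sqrt (m * n) * ‖S‖ := by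
    intro S
    have h1 : ∑ i : Fin m, ∑ j : Fin n, (S i j) ^ 2 ≤ (m * n : ℝ) * ‖S‖ ^ 2 := by
      calc ∑ i : Fin m, ∑ j : Fin n, (S i j) ^ 2
          ≤ ∑ _i : Fin m, ∑ _j : Fin n, ‖S‖ ^ 2 := by
            apply Finset.sum_le_sum; intro i _; apply Finset.sum_le_sum; intro j _
            have := habs_le_norm S i j
            nlinarith [abs_nonneg (S i j), sq_abs (S i j)]
        _ = (m * n : ℝ) * ‖S‖ ^ 2 := by
            simp [Finset.sum_const, Finset.card_univ]; ring
    calc g S ≤ Real.sqrt ((m * n : ℝ) * ‖S‖ ^ 2) := Real.sqrt_le_sqrt h1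
      _ = Real.sqrt (m * n) * ‖S‖ := by
          rw [Real.sqrt_mul (by positivity), Real.sqrt_sq (norm_nonneg S)]
  have hsum_abs : ∀ R : Matrix (Fin p) (Fin n) ℝ, ‖R‖ ≤ ∑ i : Fin p, ∑ j : Fin n, |R i j| := by
    intro R
    have hnn : (0:ℝ) ≤ ∑ i : Fin p, ∑ j : Fin n, |R i j| := by positivity
    rw [Matrix.norm_le_iff hnn]
    intro i
    intro j
    have t1 : |R i j| ≤ ∑ j' : Fin n, |R i j'| :=
      Finset.single_le_sum (f := fun j' => |R i j'|) (fun j' _ => abs_nonneg _) (Finset.mem_univ j)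
    have t2 : ∑ j' : Fin n, |R i j'| ≤ ∑ i' : Fin p, ∑ j' : Fin n, |R i' j'| :=
      Finset.single_le_sum (f := fun i' => ∑ j' : Fin n, |R i' j'|)
        (fun i' _ => by positivity) (Finset.mem_univ i)
    rw [Real.norm_eq_abs]
    exact t1.trans t2
  set D : ℝ := (p * n : ℝ) * (k ^ 2 / 2) with hD
  have hD0 : 0 ≤ D := by positivity
  have hFnn : ∀ S, 0 ≤ F S := by
    intro S
    apply Finset.sum_nonneg; intro i _; apply Finset.sum_nonneg; intro j _
    exact huber_nonneg hk.le _
  -- key lower bound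
  have e1 : ∀ S : Matrix (Fin m) (Fin n) ℝ,
      k * (∑ i : Fin p, ∑ j : Fin n, |(X - A * S) i j|) - D ≤ F S := by
    intro S
    have h2 : ∑ i : Fin p, ∑ j : Fin n, (k * |(X - A * S) i j| - k ^ 2 / 2) ≤ F S := by
      apply Finset.sum_le_sum; intro i _; apply Finset.sum_le_sum; intro j _
      exact huber_lower _
    calc k * (∑ i : Fin p, ∑ j : Fin n, |(X - A * S) i j|) - D
        = ∑ i : Fin p, ∑ j : Fin n, (k * |(X - A * S) i j| - k ^ 2 / 2) := by
          simp [Finset.sum_sub_distrib, Finset.mul_sum, Finset.sum_const, Finset.card_univ, hD]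
          ring
      _ ≤ F S := h2
  have key : ∀ S : Matrix (Fin m) (Fin n) ℝ, k * ‖S‖ ≤ (C + 1) * (F S + D + k * ‖X‖) := by
    intro S
    have h1 : ‖A * S‖ ≤ ‖X - A * S‖ + ‖X‖ := by
      have h := norm_sub_le X (X - A * S)
      rw [sub_sub_cancel] at h
      linarith
    have h2 : ‖X - A * S‖ ≤ ∑ i : Fin p, ∑ j : Fin n, |(X - A * S) i j| := hsum_abs _
    have h3 := e1 S
    have h4 := hCS S
    nlinarith [norm_nonneg (A * S), norm_nonneg S, norm_nonneg X, norm_nonneg (X - A * S),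
      hFnn S, mul_le_mul_of_nonneg_left h1 hk.le, mul_le_mul_of_nonneg_left h2 hk.le,
      mul_le_mul_of_nonneg_left h4 hk.le]
  set Q : ℝ := Real.sqrt (m * n) * (C + 1) + 1 with hQ
  have hQ0 : 0 < Q := by positivity
  have key2 : ∀ S : Matrix (Fin m) (Fin n) ℝ, k * g S ≤ Q * (F S + D + k * ‖X‖) := by
    intro S
    have h1 : k * g S ≤ k * (Real.sqrt (m * n) * ‖S‖) :=
      mul_le_mul_of_nonneg_left (hg_le S) hk.le
    have h2 := mul_le_mul_of_nonneg_left (key S) (Real.sqrt_nonneg (m * n : ℝ))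
    have h3 : 0 ≤ F S + D + k * ‖X‖ := by
      have := hFnn S; positivity
    nlinarith [Real.sqrt_nonneg (m * n : ℝ)]
  have coer : Filter.Tendsto F (Filter.comap g Filter.atTop) Filter.atTop := by
    rw [Filter.tendsto_atTop]
    intro b
    rw [Filter.eventually_comap]
    rw [Filter.eventually_atTop]
    refine ⟨Q * (|b| + D + k * ‖X‖ + 1) / k, fun a ha S hS => ?_⟩
    have hga : Q * (|b| + D + k * ‖X‖ + 1) / k ≤ g S := hS ▸ ha
    have hkg : Q * (|b| + D + k * ‖X‖ + 1) ≤ k * g S := by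
      rw [div_le_iff₀ hk] at hga
      nlinarith [hga]
    have := key2 S
    have h5 : Q * (|b| + D + k * ‖X‖ + 1) ≤ Q * (F S + D + k * ‖X‖) := le_trans hkg this
    have h6 : |b| + D + k * ‖X‖ + 1 ≤ F S + D + k * ‖X‖ :=
      le_of_mul_le_mul_left h5 hQ0
    have : |b| + 1 ≤ F S := by linarith
    linarith [le_abs_self b]
  -- existence of minimizer
  have hFcont : Continuous F := by
    apply continuous_finset_sum; intro i _; apply continuous_finset_sum; intro j _
    apply (huber_continuous k).comp
    have : (fun S : Matrix (Fin m) (Fin n) ℝ => (X - A * S) i j)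
        = fun S : Matrix (Fin m) (Fin n) ℝ => X i j - ∑ l : Fin m, A i l * S l j := by
      ext S; simp [Matrix.sub_apply, Matrix.mul_apply]
    rw [this]
    exact continuous_const.sub (continuous_finset_sum _ fun l _ =>
      continuous_const.mul ((continuous_apply j).comp (continuous_apply l)))
  set Kset : Set (Matrix (Fin m) (Fin n) ℝ) :=
    {S | (∀ i j, 0 ≤ S i j) ∧ F S ≤ F 0} with hKset
  have h0K : (0 : Matrix (Fin m) (Fin n) ℝ) ∈ Kset := ⟨fun i j => le_refl 0, le_refl _⟩
  have hclosed : IsClosed Kset := by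
    have h1 : IsClosed {S : Matrix (Fin m) (Fin n) ℝ | ∀ i j, 0 ≤ S i j} := by
      have : {S : Matrix (Fin m) (Fin n) ℝ | ∀ i j, 0 ≤ S i j}
          = ⋂ i, ⋂ j, {S : Matrix (Fin m) (Fin n) ℝ | 0 ≤ S i j} := by
        ext S; simp [Set.mem_iInter]
      rw [this]
      exact isClosed_iInter fun i => isClosed_iInter fun j =>
        isClosed_le continuous_const ((continuous_apply j).comp (continuous_apply i))
    have h2 : IsClosed {S : Matrix (Fin m) (Fin n) ℝ | F S ≤ F 0} :=
      isClosed_le hFcont continuous_const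
    exact h1.inter h2
  have hbdd : Bornology.IsBounded Kset := by
    apply (Metric.isBounded_closedBall
      (x := (0 : Matrix (Fin m) (Fin n) ℝ)) (r := (C + 1) * (F 0 + D + k * ‖X‖) / k)).subset
    intro S hS
    rw [Metric.mem_closedBall, dist_zero_right]
    have h1 := key S
    have h2 : F S ≤ F 0 := hS.2
    rw [le_div_iff₀ hk]
    nlinarith [hFnn 0, norm_nonneg X, norm_nonneg S]
  have hcompact : IsCompact Kset := Metric.isCompact_of_isClosed_isBounded hclosed hbdd
  obtain ⟨S₀, hS₀K, hmin⟩ := hcompact.exists_isMinOn ⟨0, h0K⟩ hFcont.continuousOn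
  refine ⟨coer, S₀, hS₀K.1, ?_⟩
  intro S hS
  by_cases hc : F S ≤ F 0
  · exact hmin ⟨hS, hc⟩
  · calc F S₀ ≤ F 0 := hmin h0K
      _ ≤ F S := (not_le.mp hc).le
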